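/- In the Gaussian bi-factor model with G groups, write the D×(G+1) loading matrix A = [a₀, a₁,…,a_G] in block form with global loading blocks b_{01},…,b_{0G} and group loading vectors b₁,…,b_G (so A = [[b₀₁, b₁, 0], [b_{0r}, 0, B_r]] where b_{0r} = (b₀₂ᵀ,…,b_{0G}ᵀ)ᵀ and B_r = diag(b₂,…,b_G)), with Ψ² = diag(Ψ₁², Ψ_r²) having strictly positive diagonal. Let Σ_D = A Aᵀ + Ψ² be the correlation matrix of Z_D, M = Σ_D⁻¹, Σ₁ = [[b₀₁b₀₁ᵀ + b₁b₁ᵀ + Ψ₁², b₀₁], [b₀₁ᵀ, 1]] be the correlation matrix of (Z₁ᵀ, W₀), and N = Σ₁⁻¹ with blocks N₁₁ (d₁×d₁) and N₁₂ (d₁×1). Then for every z_D = (z₁ᵀ, z_rᵀ)ᵀ ∈ ℝ^D, the two-stage factor scores coincide with the regression factor scores: w̃₀ := a₀ᵀ M z_D equals ŵ₀ = E(W₀ | Z_D = z_D), and b₁ᵀ N₁₁ z₁ + (b₁ᵀ N₁₂) · (a₀ᵀ M z_D) = a₁ᵀ M z_D, i.e., w̃₁(w̃₀) = ŵ₁ =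 E(W₁ | Z_D = z_D). Equivalently, the block matrix identities (a) N₁₁ + N₁₂(b₀₁ᵀ M₁₁ + b_{0r}ᵀ M₂₁) = M₁₁ and (b) N₁₂(b₀₁ᵀ M₁₂ + b_{0r}ᵀ M₂₂) = M₁₂ hold, where M is partitioned into blocks M₁₁, M₁₂, M₂₁, M₂₂ conformably with (z₁, z_r). -/
import Mathlib


/-!
STATEMENT 18: Bi-factor Gaussian model: equivalence of the two-stage factor scores and
the regression factor scores.  With loading blocks `b₀₁, b₁ ∈ ℝ^{d₁}`, `b_{0r} ∈ ℝ^{d_r}`,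
`B_r`, `Ψ²` with strictly positive diagonal, `Σ_D = A Aᵀ + Ψ²` (in block form), `M = Σ_D⁻¹`,
`Σ₁` the correlation matrix of `(Z₁ᵀ, W₀)` and `N = Σ₁⁻¹`, one has, for every
`z = (z₁ᵀ, z_rᵀ)ᵀ`: `b₁ᵀ N₁₁ z₁ + (b₁ᵀ N₁₂)(a₀ᵀ M z) = a₁ᵀ M z` (so
`w̃₁(w̃₀) = ŵ₁ = E(W₁ | Z_D = z)` with `w̃₀ = a₀ᵀ M z = ŵ₀`), equivalently the block
identities (a) `N₁₁ + N₁₂ (b₀₁ᵀ M₁₁ + b_{0r}ᵀ M₂₁) = M₁₁` and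
(b) `N₁₂ (b₀₁ᵀ M₁₂ + b_{0r}ᵀ M₂₂) = M₁₂`.
-/

open Matrix


private lemma isUnit_det_of_factor {n m : Type*} [Fintype n] [Fintype m] [DecidableEq n]
    (S : Matrix n n ℝ) (C : Matrix n m ℝ) (hS : S = C * Cᵀ)
    (hker : ∀ v : n → ℝ, Cᵀ *ᵥ v = 0 → v = 0) : IsUnit S.det := by
  rw [isUnit_iff_ne_zero]
  intro hdet
  obtain ⟨v, hv, hv0⟩ := (Matrix.exists_mulVec_eq_zero_iff).2 hdet
  apply hv
  apply hker
  rw [← dotProduct_self_eq_zero (v := Cᵀ *ᵥ v)]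
  have h1 : v ⬝ᵥ (S *ᵥ v) = 0 := by rw [hv0, dotProduct_zero]
  rw [hS, ← mulVec_mulVec, dotProduct_mulVec, mulVec_transpose] at h1
  rw [mulVec_transpose]
  exact h1

private def CDmat {d1 dr G' : ℕ} (b01 b1 : Fin d1 → ℝ) (b0r : Fin dr → ℝ)
    (Br : Matrix (Fin dr) (Fin G') ℝ) (ψ1 : Fin d1 → ℝ) (ψr : Fin dr → ℝ) :
    Matrix (Fin d1 ⊕ Fin dr) (Unit ⊕ Unit ⊕ Fin G' ⊕ (Fin d1 ⊕ Fin dr)) ℝ :=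
  Matrix.of fun r c =>
    match c with
    | Sum.inl _ => Sum.elim b01 b0r r
    | Sum.inr (Sum.inl _) => Sum.elim b1 (fun _ => (0:ℝ)) r
    | Sum.inr (Sum.inr (Sum.inl g)) => Sum.elim (fun _ => (0:ℝ)) (fun j => Br j g) r
    | Sum.inr (Sum.inr (Sum.inr c')) => Matrix.diagonal (Sum.elim ψ1 ψr) r c'

private def C1mat {d1 : ℕ} (b01 b1 : Fin d1 → ℝ) (ψ1 : Fin d1 → ℝ) :
    Matrix (Fin d1 ⊕ Unit) (Unit ⊕ Unit ⊕ Fin d1) ℝ :=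
  Matrix.of fun r c =>
    match c with
    | Sum.inl _ => Sum.elim b01 (fun _ => (1:ℝ)) r
    | Sum.inr (Sum.inl _) => Sum.elim b1 (fun _ => (0:ℝ)) r
    | Sum.inr (Sum.inr k) => Sum.elim (fun i => Matrix.diagonal ψ1 i k) (fun _ => (0:ℝ)) r

theorem bifactor_two_stage_equals_regression_scores {d1 dr G' : ℕ}
    (b01 b1 : Fin d1 → ℝ) (b0r : Fin dr → ℝ) (Br : Matrix (Fin dr) (Fin G') ℝ)
    (ψ1 : Fin d1 → ℝ) (ψr : Fin dr → ℝ)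
    (hψ1 : ∀ i, 0 < ψ1 i) (hψr : ∀ i, 0 < ψr i)
    -- `Σ₁₁`, `Σ₂₂` and the full correlation matrix `Σ_D` of `Z_D`
    (S11 : Matrix (Fin d1) (Fin d1) ℝ)
    (hS11 : S11 = vecMulVec b01 b01 + vecMulVec b1 b1 +
      Matrix.diagonal (fun i => ψ1 i ^ 2))
    (S22 : Matrix (Fin dr) (Fin dr) ℝ)
    (hS22 : S22 = vecMulVec b0r b0r + Br * Br.transpose +
      Matrix.diagonal (fun i => ψr i ^ 2))
    (SD : Matrix (Fin d1 ⊕ Fin dr) (Fin d1 ⊕ Fin dr) ℝ)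
    (hSD : SD = Matrix.fromBlocks S11 (vecMulVec b01 b0r) (vecMulVec b0r b01) S22)
    (M : Matrix (Fin d1 ⊕ Fin dr) (Fin d1 ⊕ Fin dr) ℝ) (hM : M = SD⁻¹)
    -- `Σ₁`, the correlation matrix of `(Z₁ᵀ, W₀)`, and `N = Σ₁⁻¹`
    (S1 : Matrix (Fin d1 ⊕ Unit) (Fin d1 ⊕ Unit) ℝ)
    (hS1 : S1 = Matrix.fromBlocks S11 (Matrix.of fun i (_ : Unit) => b01 i)
      (Matrix.of fun (_ : Unit) j => b01 j) 1)
    (N : Matrix (Fin d1 ⊕ Unit) (Fin d1 ⊕ Unit) ℝ) (hN : N = S1⁻¹) :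
    -- the two-stage factor score for `W₁` equals the regression factor score
    (∀ z : Fin d1 ⊕ Fin dr → ℝ,
      (∑ i, ∑ k, b1 i * N (Sum.inl i) (Sum.inl k) * z (Sum.inl k)) +
        (∑ i, b1 i * N (Sum.inl i) (Sum.inr ())) *
          (Sum.elim b01 b0r ⬝ᵥ M.mulVec z) =
        Sum.elim b1 (fun _ => (0:ℝ)) ⬝ᵥ M.mulVec z) ∧
    -- block identity (a): `N₁₁ + N₁₂ (b₀₁ᵀ M₁₁ + b_{0r}ᵀ M₂₁) = M₁₁`
    (∀ (i k : Fin d1),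
      N (Sum.inl i) (Sum.inl k) + N (Sum.inl i) (Sum.inr ()) *
        ((∑ l, b01 l * M (Sum.inl l) (Sum.inl k)) +
         (∑ l, b0r l * M (Sum.inr l) (Sum.inl k))) = M (Sum.inl i) (Sum.inl k)) ∧
    -- block identity (b): `N₁₂ (b₀₁ᵀ M₁₂ + b_{0r}ᵀ M₂₂) = M₁₂`
    (∀ (i : Fin d1) (k : Fin dr),
      N (Sum.inl i) (Sum.inr ()) *
        ((∑ l, b01 l * M (Sum.inl l) (Sum.inr k)) +
         (∑ l, b0r l * M (Sum.inr l) (Sum.inr k))) = M (Sum.inl i) (Sum.inr k)) := by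
  -- invertibility of `SD` and `S1`
  have hSDdet : IsUnit SD.det := by
    apply isUnit_det_of_factor SD (CDmat b01 b1 b0r Br ψ1 ψr)
    · ext r c
      rcases r with i | i <;> rcases c with j | j <;>
        simp [CDmat, hSD, hS11, hS22, mul_apply, Fintype.sum_sum_type, vecMulVec_apply,
          diagonal_apply, Sum.inl.injEq, Sum.inr.injEq, Finset.sum_ite_eq,
          Finset.sum_ite_eq', mul_ite, ite_mul, pow_two] <;>
        (split_ifs with hij
         · subst hij; ring
         · ring)
    · intro v hv
      funext r
      have h := congrFun hv (Sum.inr (Sum.inr (Sum.inr r)))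
      simp [CDmat, mulVec, dotProduct, transpose_apply, diagonal_apply, Fintype.sum_sum_type,
        Sum.inl.injEq, Sum.inr.injEq, Finset.sum_ite_eq, Finset.sum_ite_eq',
        mul_ite, ite_mul] at h
      rcases r with i | i
      · simpa using h.resolve_left (ne_of_gt (hψ1 i))
      · simpa using h.resolve_left (ne_of_gt (hψr i))
  have hS1det : IsUnit S1.det := by
    apply isUnit_det_of_factor S1 (C1mat b01 b1 ψ1)
    · ext r c
      rcases r with i | i <;> rcases c with j | j <;>
        simp [C1mat, hS1, hS11, mul_apply, Fintype.sum_sum_type, vecMulVec_apply,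
          diagonal_apply, Sum.inl.injEq, Finset.sum_ite_eq,
          Finset.sum_ite_eq', mul_ite, ite_mul, pow_two] <;>
        (split_ifs with hij
         · subst hij; ring
         · ring)
    · intro v hv
      have h1 : ∀ i, v (Sum.inl i) = 0 := by
        intro i
        have h := congrFun hv (Sum.inr (Sum.inr i))
        simp [C1mat, mulVec, dotProduct, transpose_apply, diagonal_apply, Fintype.sum_sum_type,
          Sum.inl.injEq, Finset.sum_ite_eq, Finset.sum_ite_eq', mul_ite, ite_mul] at h
        exact h.resolve_left (ne_of_gt (hψ1 i))
      funext r
      rcases r with i | i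
      · exact h1 i
      · have h := congrFun hv (Sum.inl ())
        simp [C1mat, mulVec, dotProduct, transpose_apply, Fintype.sum_sum_type, h1] at h
        exact h
  have hMeq : SD * M = 1 := by rw [hM]; exact Matrix.mul_nonsing_inv SD hSDdet
  have hNeq : N * S1 = 1 := by rw [hN]; exact Matrix.nonsing_inv_mul S1 hS1det
  -- the auxiliary matrices for the two-stage computation
  set w : (Fin d1 ⊕ Fin dr) → ℝ := fun c =>
    (∑ l, b01 l * M (Sum.inl l) c) + ∑ l, b0r l * M (Sum.inr l) c with hw
  set U : Matrix (Fin d1 ⊕ Unit) (Fin d1 ⊕ Fin dr) ℝ :=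
    Matrix.of (Sum.elim (fun l c => M (Sum.inl l) c)
      (fun _ c => ∑ l, b0r l * M (Sum.inr l) c)) with hU
  set Q : Matrix (Fin d1 ⊕ Unit) (Fin d1 ⊕ Fin dr) ℝ :=
    Matrix.of (Sum.elim (fun l c => if Sum.inl l = c then (1:ℝ) else 0)
      (fun _ c => w c)) with hQ
  have hS1U : S1 * U = Q := by
    ext r c
    rcases r with i | i
    · have h := congrFun (congrFun hMeq (Sum.inl i)) c
      simp [hSD, mul_apply, Fintype.sum_sum_type, vecMulVec_apply, one_apply,
        mul_assoc, Finset.mul_sum] at h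
      simp [hU, hQ, hS1, mul_apply, Fintype.sum_sum_type, one_apply,
        mul_assoc, Finset.mul_sum]
      exact h
    · simp [hU, hQ, hw, hS1, mul_apply, Fintype.sum_sum_type, one_apply]
  have hUNQ : U = N * Q := by
    calc U = (N * S1) * U := by rw [hNeq, Matrix.one_mul]
    _ = N * (S1 * U) := Matrix.mul_assoc N S1 U
    _ = N * Q := by rw [hS1U]
  have ha : ∀ (i k : Fin d1),
      N (Sum.inl i) (Sum.inl k) + N (Sum.inl i) (Sum.inr ()) *
        ((∑ l, b01 l * M (Sum.inl l) (Sum.inl k)) +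
         (∑ l, b0r l * M (Sum.inr l) (Sum.inl k))) = M (Sum.inl i) (Sum.inl k) := by
    intro i k
    have h := congrFun (congrFun hUNQ (Sum.inl i)) (Sum.inl k)
    simp [hU, hQ, hw, mul_apply, Fintype.sum_sum_type, Sum.inl.injEq,
      mul_ite, ite_mul, Finset.sum_ite_eq, Finset.sum_ite_eq'] at h
    linarith [h]
  have hb : ∀ (i : Fin d1) (k : Fin dr),
      N (Sum.inl i) (Sum.inr ()) *
        ((∑ l, b01 l * M (Sum.inl l) (Sum.inr k)) +
         (∑ l, b0r l * M (Sum.inr l) (Sum.inr k))) = M (Sum.inl i) (Sum.inr k) := by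
    intro i k
    have h := congrFun (congrFun hUNQ (Sum.inl i)) (Sum.inr k)
    simp [hU, hQ, hw, mul_apply, Fintype.sum_sum_type] at h
    linarith [h]
  refine ⟨?_, ha, hb⟩
  intro z
  have hS0 : Sum.elim b01 b0r ⬝ᵥ M.mulVec z = ∑ c, w c * z c := by
    simp only [dotProduct, mulVec, Fintype.sum_sum_type, Sum.elim_inl, Sum.elim_inr,
      hw, add_mul, Finset.sum_add_distrib, Finset.mul_sum, Finset.sum_mul]
    simp only [mul_add, Finset.mul_sum, Finset.sum_add_distrib, mul_assoc]
    congr 1 <;> congr 1 <;> exact Finset.sum_comm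
  have hrow : ∀ i : Fin d1, (M *ᵥ z) (Sum.inl i) =
      (∑ k, N (Sum.inl i) (Sum.inl k) * z (Sum.inl k)) +
        N (Sum.inl i) (Sum.inr ()) * (∑ c, w c * z c) := by
    intro i
    have e1 : ∑ k, M (Sum.inl i) (Sum.inl k) * z (Sum.inl k) =
        ∑ k, (N (Sum.inl i) (Sum.inl k) + N (Sum.inl i) (Sum.inr ()) * w (Sum.inl k)) *
          z (Sum.inl k) :=
      Finset.sum_congr rfl (fun k _ => by rw [← ha i k])
    have e2 : ∑ k, M (Sum.inl i) (Sum.inr k) * z (Sum.inr k) =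
        ∑ k, (N (Sum.inl i) (Sum.inr ()) * w (Sum.inr k)) * z (Sum.inr k) :=
      Finset.sum_congr rfl (fun k _ => by rw [← hb i k])
    simp only [mulVec, dotProduct, Fintype.sum_sum_type, e1, e2, add_mul,
      Finset.sum_add_distrib, mul_assoc, ← Finset.mul_sum, Finset.mul_sum (f := fun c => w c * z c)]
    ring
  rw [hS0]
  have hR : Sum.elim b1 (fun _ => (0:ℝ)) ⬝ᵥ M *ᵥ z =
      ∑ i, b1 i * (M *ᵥ z) (Sum.inl i) := by
    simp [dotProduct, Fintype.sum_sum_type]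
  rw [hR]
  simp only [hrow, mul_add, Finset.sum_add_distrib, Finset.mul_sum, Finset.sum_mul, mul_assoc]
  congr 1
  exact Finset.sum_comm
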